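/- For vectors k₁,...,k_{n+1} ∈ F₂ⁿ, det₂(k₁,...,k_{n+1}) = Σ_{1 ≤ i < j ≤ n+1} Δ_{ij}, where Δ_{ij} is the determinant of the n×n matrix whose first n−1 columns are the vectors k₁,...,k_{n+1} with kᵢ and kⱼ deleted (in order), and whose last column is the coordinate-wise product of kᵢ and kⱼ. -/

import Mathlib

open Classical in
/-- The 2-determinant of `n+1` vectors in `F₂ⁿ`: equals `0` if the rank of the vectors
is less than `n`, and `∑ λᵢ + 1` for the unique nonzero relation `∑ λᵢ kᵢ = 0` otherwise. -/
noncomputable def det2 (n : ℕ) (k : Fin (n + 1) → Fin n → ZMod 2) : ZMod 2 :=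
  if h : Module.finrank (ZMod 2) (Submodule.span (ZMod 2) (Set.range k)) = n ∧
      ∃ lam : Fin (n + 1) → ZMod 2, lam ≠ 0 ∧ ∀ j, ∑ i, lam i * k i j = 0
  then (∑ i, h.2.choose i) + 1
  else 0


namespace Det2Aux

lemma zmod2_cases (a : ZMod 2) : a = 0 ∨ a = 1 := by revert a; decide

lemma zmod2_ne_zero {a : ZMod 2} (h : a ≠ 0) : a = 1 :=
  (zmod2_cases a).resolve_left h

lemma zmod2_add_self (a : ZMod 2) : a + a = 0 := by revert a; decide

lemma zmod2_pow (a : ZMod 2) {m : ℕ} (hm : m ≠ 0) : a ^ m = a := by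
  rcases zmod2_cases a with h | h <;> subst h
  · exact zero_pow hm
  · exact one_pow m

lemma units_smul_zmod2 (u : ℤˣ) (z : ZMod 2) : u • z = z := by
  rcases Int.units_eq_one_or u with h | h <;> subst h
  · exact one_smul _ _
  · show ((-1 : ℤˣ) : ℤ) • z = z
    have : ∀ w : ZMod 2, -w = w := by decide
    simp [this]

/-- partial inverse of `j.succAbove`, with junk values; needs `n ≠ 0`. -/
def rho {n : ℕ} [NeZero n] (j t : Fin (n + 1)) : Fin n :=
  if h : (t : ℕ) < (j : ℕ) then ⟨t, by omega⟩
  else if h2 : (t : ℕ) - 1 < n then ⟨(t : ℕ) - 1, h2⟩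
  else ⟨0, Nat.pos_of_ne_zero (NeZero.ne n)⟩

lemma rho_succAbove {n : ℕ} [NeZero n] (j : Fin (n + 1)) (r : Fin n) :
    rho j (j.succAbove r) = r := by
  have hj := j.isLt
  have hr := r.isLt
  rw [Fin.succAbove]
  split
  · rename_i h
    have h' : (r : ℕ) < (j : ℕ) := by
      simpa [Fin.lt_def] using h
    simp only [rho, Fin.coe_castSucc]
    rw [dif_pos h']
  · rename_i h
    have h' : ¬ (r : ℕ) < (j : ℕ) := by
      simpa [Fin.lt_def] using h
    simp only [rho, Fin.val_succ]
    rw [dif_neg (by omega), dif_pos (by omega)]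
    simp

lemma succAbove_rho {n : ℕ} [NeZero n] {i j : Fin (n + 1)} (h : i ≠ j) :
    j.succAbove (rho j i) = i := by
  obtain ⟨r, hr⟩ := Fin.exists_succAbove_eq h
  rw [← hr, rho_succAbove]

/-- the near-bijection associated to `(i, j, σ)`. -/
def efun {n : ℕ} [NeZero n] (i j : Fin (n + 1)) (σ : Equiv.Perm (Fin n)) :
    Fin (n + 1) → Fin n :=
  fun t => if t = j then σ (rho j i) else σ (rho j t)

lemma efun_succAbove {n : ℕ} [NeZero n] (i j : Fin (n + 1)) (σ : Equiv.Perm (Fin n))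
    (r : Fin n) : efun i j σ (j.succAbove r) = σ r := by
  rw [efun, if_neg (Fin.succAbove_ne j r), rho_succAbove]

lemma efun_at_j {n : ℕ} [NeZero n] (i j : Fin (n + 1)) (σ : Equiv.Perm (Fin n)) :
    efun i j σ j = σ (rho j i) := by rw [efun, if_pos rfl]

lemma efun_at_i {n : ℕ} [NeZero n] {i j : Fin (n + 1)} (h : i ≠ j)
    (σ : Equiv.Perm (Fin n)) : efun i j σ i = σ (rho j i) := by
  rw [efun, if_neg h]

lemma efun_collision {n : ℕ} [NeZero n] {i j : Fin (n + 1)} (hij : i < j)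
    (σ : Equiv.Perm (Fin n)) {a b : Fin (n + 1)} (hab : a < b)
    (h : efun i j σ a = efun i j σ b) : a = i ∧ b = j := by
  have hijne : i ≠ j := ne_of_lt hij
  by_cases hb : b = j
  · have ha : a ≠ j := fun hh => absurd (hb ▸ hh ▸ hab) (lt_irrefl _)
    rw [efun, if_neg ha, efun, if_pos hb] at h
    have heq := σ.injective h
    have ha' : j.succAbove (rho j a) = a := succAbove_rho ha
    have hi' : j.succAbove (rho j i) = i := succAbove_rho hijne
    rw [heq] at ha'
    exact ⟨ha'.symm.trans hi', hb⟩
  · by_cases ha : a = j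
    · exfalso
      rw [efun, if_pos ha, efun, if_neg hb] at h
      have heq := σ.injective h
      have hb' : j.succAbove (rho j b) = b := succAbove_rho hb
      have hi' : j.succAbove (rho j i) = i := succAbove_rho hijne
      rw [← heq, hi'] at hb'
      -- hb' : i = b
      have : i < b := lt_of_lt_of_le hij (le_of_lt (ha ▸ hab))
      rw [hb'] at this
      exact lt_irrefl _ this
    · rw [efun, if_neg ha, efun, if_neg hb] at h
      have := σ.injective h
      have ha' : j.succAbove (rho j a) = a := succAbove_rho ha
      have hb' : j.succAbove (rho j b) = b := succAbove_rho hb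
      rw [this] at ha'
      rw [ha'] at hb'
      exact absurd (hb' ▸ hab) (lt_irrefl _)

lemma efun_surjective {n : ℕ} [NeZero n] (i j : Fin (n + 1)) (σ : Equiv.Perm (Fin n)) :
    Function.Surjective (efun i j σ) := by
  intro c
  exact ⟨j.succAbove (σ.symm c), by rw [efun_succAbove]; simp⟩

end Det2Aux

namespace Det2Aux

open Finset

lemma prod_update_eq {n : ℕ} [NeZero n] (k : Fin (n + 1) → Fin n → ZMod 2)
    {i j : Fin (n + 1)} (hij : i < j) (σ : Equiv.Perm (Fin n)) :
    (∏ r : Fin n, Function.update k i (fun t => k i t * k j t) (j.succAbove r) (σ r))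
      = ∏ t : Fin (n + 1), k t (efun i j σ t) := by
  set g := efun i j σ with hg
  have hgs : ∀ r, g (j.succAbove r) = σ r := fun r => efun_succAbove i j σ r
  have hgij : g i = g j := (efun_at_i hij.ne σ).trans (efun_at_j i j σ).symm
  have hfac : ∀ r : Fin n,
      Function.update k i (fun t => k i t * k j t) (j.succAbove r) (σ r)
        = k (j.succAbove r) (g (j.succAbove r)) * (if r = rho j i then k j (g j) else 1) := by
    intro r
    by_cases h : j.succAbove r = i
    · have hr : r = rho j i := by rw [← h, rho_succAbove]
      rw [h, Function.update_self, if_pos hr, ← hgs r, h, ← hgij]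
    · have hr : r ≠ rho j i := by
        intro hh; exact h (by rw [hh, succAbove_rho hij.ne])
      rw [Function.update_of_ne h, if_neg hr, mul_one, hgs r]
  calc (∏ r : Fin n, Function.update k i (fun t => k i t * k j t) (j.succAbove r) (σ r))
      = ∏ r : Fin n, (k (j.succAbove r) (g (j.succAbove r)) *
          (if r = rho j i then k j (g j) else 1)) := Finset.prod_congr rfl (fun r _ => hfac r)
    _ = (∏ r : Fin n, k (j.succAbove r) (g (j.succAbove r))) *
          ∏ r : Fin n, (if r = rho j i then k j (g j) else 1) := Finset.prod_mul_distrib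
    _ = (∏ r : Fin n, k (j.succAbove r) (g (j.succAbove r))) * k j (g j) := by
          rw [Finset.prod_ite_eq' Finset.univ (rho j i) (fun _ => k j (g j)),
            if_pos (Finset.mem_univ _)]
    _ = ∏ t : Fin (n + 1), k t (g t) := by
          rw [mul_comm, ← Fin.prod_univ_succAbove (fun t => k t (g t)) j]

open Classical in
lemma sum_det_eq_surj {n : ℕ} [NeZero n] (k : Fin (n + 1) → Fin n → ZMod 2) :
    (∑ j : Fin (n + 1), ∑ i ∈ Finset.Iio j,
      Matrix.det (Matrix.of fun (r c : Fin n) =>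
        Function.update k i (fun t => k i t * k j t) (j.succAbove r) c))
    = ∑ g ∈ Finset.univ.filter (fun g : Fin (n + 1) → Fin n => Function.Surjective g),
        ∏ t : Fin (n + 1), k t (g t) := by
  have hdet : ∀ (i j : Fin (n + 1)),
      Matrix.det (Matrix.of fun (r c : Fin n) =>
        Function.update k i (fun t => k i t * k j t) (j.succAbove r) c)
      = ∑ σ : Equiv.Perm (Fin n), ∏ r : Fin n,
          Function.update k i (fun t => k i t * k j t) (j.succAbove r) (σ r) := by
    intro i j
    rw [← Matrix.det_transpose, Matrix.det_apply]
    apply Finset.sum_congr rfl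
    intro σ _
    rw [units_smul_zmod2]
    apply Finset.prod_congr rfl
    intro r _
    rfl
  -- rewrite LHS into a sum over a filtered product type
  have step1 : (∑ j : Fin (n + 1), ∑ i ∈ Finset.Iio j,
      Matrix.det (Matrix.of fun (r c : Fin n) =>
        Function.update k i (fun t => k i t * k j t) (j.succAbove r) c))
      = ∑ q ∈ Finset.univ.filter
          (fun q : (Fin (n + 1) × Fin (n + 1)) × Equiv.Perm (Fin n) => q.1.2 < q.1.1),
          ∏ r : Fin n,
            Function.update k q.1.2 (fun t => k q.1.2 t * k q.1.1 t)
              (q.1.1.succAbove r) (q.2 r) := by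
    rw [Finset.sum_filter, Fintype.sum_prod_type, Fintype.sum_prod_type]
    apply Finset.sum_congr rfl
    intro j _
    have hIio : Finset.Iio j = Finset.univ.filter (fun i => i < j) := by
      ext x; simp
    calc (∑ i ∈ Finset.Iio j,
        Matrix.det (Matrix.of fun (r c : Fin n) =>
          Function.update k i (fun t => k i t * k j t) (j.succAbove r) c))
        = ∑ i ∈ Finset.Iio j, ∑ σ : Equiv.Perm (Fin n), ∏ r : Fin n,
            Function.update k i (fun t => k i t * k j t) (j.succAbove r) (σ r) :=
          Finset.sum_congr rfl (fun i _ => hdet i j)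
      _ = ∑ i ∈ Finset.univ.filter (fun i => i < j), ∑ σ : Equiv.Perm (Fin n), ∏ r : Fin n,
            Function.update k i (fun t => k i t * k j t) (j.succAbove r) (σ r) := by
          rw [← hIio]
      _ = ∑ i : Fin (n + 1), if i < j then (∑ σ : Equiv.Perm (Fin n), ∏ r : Fin n,
            Function.update k i (fun t => k i t * k j t) (j.succAbove r) (σ r)) else 0 :=
          Finset.sum_filter _ _
      _ = ∑ i : Fin (n + 1), ∑ σ : Equiv.Perm (Fin n), (if i < j then ∏ r : Fin n,
            Function.update k i (fun t => k i t * k j t) (j.succAbove r) (σ r) else 0) :=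
          Finset.sum_congr rfl (fun i _ => by by_cases h : i < j <;> simp [h])
  rw [step1]
  apply Finset.sum_nbij (fun q => efun q.1.2 q.1.1 q.2)
  · intro q _
    simp only [Finset.mem_filter, Finset.mem_univ, true_and]
    exact efun_surjective _ _ _
  · rintro ⟨⟨j1, i1⟩, σ1⟩ hq ⟨⟨j2, i2⟩, σ2⟩ hq' h
    simp only [Finset.coe_filter, Set.mem_setOf_eq, Finset.mem_univ, true_and] at hq hq'
    replace h : efun i1 j1 σ1 = efun i2 j2 σ2 := h
    have hab : efun i2 j2 σ2 i1 = efun i2 j2 σ2 j1 := by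
      rw [← h]
      exact (efun_at_i (ne_of_lt hq) σ1).trans (efun_at_j i1 j1 σ1).symm
    obtain ⟨h1, h2⟩ := efun_collision hq' σ2 hq hab
    subst h1; subst h2
    have hσ : σ1 = σ2 := by
      apply Equiv.ext
      intro r
      have := congrFun h (j1.succAbove r)
      rwa [efun_succAbove, efun_succAbove] at this
    rw [hσ]
  · intro g hg
    simp only [Finset.coe_filter, Set.mem_setOf_eq, Finset.mem_univ, true_and] at hg
    obtain ⟨a, b, hab, heq⟩ := Fintype.exists_ne_map_eq_of_card_lt g (by simp)
    obtain ⟨x, y, hxy, hval⟩ : ∃ x y, x < y ∧ g x = g y := by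
      rcases lt_or_gt_of_ne hab with hlt | hlt
      · exact ⟨a, b, hlt, heq⟩
      · exact ⟨b, a, hlt, heq.symm⟩
    have hσ0 : Function.Surjective (fun r => g (y.succAbove r)) := by
      intro c
      obtain ⟨t, ht⟩ := hg c
      by_cases hty : t = y
      · exact ⟨rho y x, by
          show g (y.succAbove (rho y x)) = c
          rw [succAbove_rho (ne_of_lt hxy), hval, ← hty, ht]⟩
      · exact ⟨rho y t, by
          show g (y.succAbove (rho y t)) = c
          rw [succAbove_rho hty, ht]⟩
    have hbij := Finite.surjective_iff_bijective.mp hσ0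
    refine ⟨((y, x), Equiv.ofBijective _ hbij), ?_, ?_⟩
    · simp only [Finset.coe_filter, Set.mem_setOf_eq, Finset.mem_univ, true_and]
      exact hxy
    · funext t
      show efun x y (Equiv.ofBijective _ hbij) t = g t
      by_cases hty : t = y
      · rw [hty, efun_at_j]
        show g (y.succAbove (rho y x)) = g y
        rw [succAbove_rho (ne_of_lt hxy), hval]
      · have hstep : efun x y (Equiv.ofBijective _ hbij) t
            = (Equiv.ofBijective _ hbij) (rho y t) := by
          simp only [efun, if_neg hty]
        rw [hstep]
        show g (y.succAbove (rho y t)) = g t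
        rw [succAbove_rho hty]
  · intro q hq
    simp only [Finset.mem_filter, Finset.mem_univ, true_and] at hq
    exact prod_update_eq k hq q.2

end Det2Aux

namespace Det2Aux

open Finset

open Classical in
lemma sum_x_eq_surj (n : ℕ) (k : Fin (n + 1) → Fin n → ZMod 2) :
    (∑ x : Fin n → ZMod 2, ∏ t : Fin (n + 1), ∑ c : Fin n, k t c * x c)
    = ∑ g ∈ Finset.univ.filter (fun g : Fin (n + 1) → Fin n => Function.Surjective g),
        ∏ t : Fin (n + 1), k t (g t) := by
  have expand : ∀ x : Fin n → ZMod 2,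
      (∏ t : Fin (n + 1), ∑ c : Fin n, k t c * x c)
        = ∑ g : Fin (n + 1) → Fin n, ∏ t : Fin (n + 1), (k t (g t) * x (g t)) := by
    intro x
    rw [show (∏ t : Fin (n + 1), ∑ c : Fin n, k t c * x c)
        = ∏ t : Fin (n + 1), ∑ c ∈ Finset.univ, k t c * x c from rfl,
      Finset.prod_univ_sum (fun _ => Finset.univ) (fun t c => k t c * x c),
      Fintype.piFinset_univ]
  have key : ∀ g : Fin (n + 1) → Fin n,
      (∑ x : Fin n → ZMod 2, ∏ t : Fin (n + 1), x (g t))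
        = if Function.Surjective g then 1 else 0 := by
    intro g
    have h1 : ∀ x : Fin n → ZMod 2, (∏ t : Fin (n + 1), x (g t))
        = ∏ c : Fin n, (if c ∈ Finset.univ.image g then x c else 1) := by
      intro x
      rw [Finset.prod_ite_mem, Finset.univ_inter, Finset.prod_comp (fun c => x c) g]
      apply Finset.prod_congr rfl
      intro c hc
      apply zmod2_pow
      obtain ⟨t, _, ht⟩ := Finset.mem_image.mp hc
      exact Finset.card_ne_zero_of_mem (Finset.mem_filter.mpr ⟨Finset.mem_univ t, ht⟩)
    calc (∑ x : Fin n → ZMod 2, ∏ t : Fin (n + 1), x (g t))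
        = ∑ x : Fin n → ZMod 2, ∏ c : Fin n, (if c ∈ Finset.univ.image g then x c else 1) :=
          Finset.sum_congr rfl (fun x _ => h1 x)
      _ = ∏ c : Fin n, ∑ b : ZMod 2, (if c ∈ Finset.univ.image g then b else 1) := by
          rw [Finset.prod_univ_sum (fun _ => Finset.univ)
            (fun c b => if c ∈ Finset.univ.image g then b else 1), Fintype.piFinset_univ]
      _ = ∏ c : Fin n, (if c ∈ Finset.univ.image g then (1 : ZMod 2) else 0) := by
          apply Finset.prod_congr rfl
          intro c _
          by_cases h : c ∈ Finset.univ.image g <;> simp [h] <;> decide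
      _ = if Function.Surjective g then 1 else 0 := by
          by_cases hg : Function.Surjective g
          · rw [if_pos hg, Finset.image_univ_of_surjective hg]
            simp
          · rw [if_neg hg]
            rw [Function.Surjective] at hg
            push_neg at hg
            obtain ⟨c, hc⟩ := hg
            refine Finset.prod_eq_zero (Finset.mem_univ c) ?_
            rw [if_neg]
            simp only [Finset.mem_image, Finset.mem_univ, true_and]
            rintro ⟨t, ht⟩
            exact hc t ht
  calc (∑ x : Fin n → ZMod 2, ∏ t : Fin (n + 1), ∑ c : Fin n, k t c * x c)
      = ∑ x : Fin n → ZMod 2, ∑ g : Fin (n + 1) → Fin n,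
          ∏ t : Fin (n + 1), (k t (g t) * x (g t)) :=
        Finset.sum_congr rfl (fun x _ => expand x)
    _ = ∑ g : Fin (n + 1) → Fin n, ∑ x : Fin n → ZMod 2,
          ∏ t : Fin (n + 1), (k t (g t) * x (g t)) := Finset.sum_comm
    _ = ∑ g : Fin (n + 1) → Fin n, (∏ t : Fin (n + 1), k t (g t)) *
          (if Function.Surjective g then 1 else 0) := by
        apply Finset.sum_congr rfl
        intro g _
        rw [← key g, Finset.mul_sum]
        apply Finset.sum_congr rfl
        intro x _
        rw [Finset.prod_mul_distrib]
    _ = ∑ g : Fin (n + 1) → Fin n,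
          (if Function.Surjective g then ∏ t : Fin (n + 1), k t (g t) else 0) := by
        apply Finset.sum_congr rfl
        intro g _
        by_cases h : Function.Surjective g <;> simp [h]
    _ = ∑ g ∈ Finset.univ.filter (fun g : Fin (n + 1) → Fin n => Function.Surjective g),
          ∏ t : Fin (n + 1), k t (g t) := (Finset.sum_filter _ _).symm

end Det2Aux


namespace Det2Aux

open Finset Submodule

open Classical in
lemma la_main (n : ℕ) (k : Fin (n + 1) → Fin n → ZMod 2) :
    (if h : Module.finrank (ZMod 2) (Submodule.span (ZMod 2) (Set.range k)) = n ∧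
      ∃ lam : Fin (n + 1) → ZMod 2, lam ≠ 0 ∧ ∀ j, ∑ i, lam i * k i j = 0
    then (∑ i, h.2.choose i) + 1
    else 0)
    = ∑ x : Fin n → ZMod 2, ∏ t : Fin (n + 1), ∑ c : Fin n, k t c * x c := by
  have hswap : ∀ (lam : Fin (n + 1) → ZMod 2) (x : Fin n → ZMod 2),
      (∑ t : Fin (n + 1), lam t * ∑ c : Fin n, k t c * x c)
        = ∑ c : Fin n, (∑ t : Fin (n + 1), lam t * k t c) * x c := by
    intro lam x
    simp_rw [Finset.mul_sum, Finset.sum_mul]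
    rw [Finset.sum_comm]
    exact Finset.sum_congr rfl fun c _ => Finset.sum_congr rfl fun t _ => by ring
  set f := (Matrix.of k).mulVecLin with hf
  have hfapp : ∀ (x : Fin n → ZMod 2) (t : Fin (n + 1)), f x t = ∑ c : Fin n, k t c * x c := by
    intro x t
    simp [hf, Matrix.mulVecLin_apply, Matrix.mulVec, dotProduct]
  rcases Classical.em (Module.finrank (ZMod 2) (Submodule.span (ZMod 2) (Set.range k)) = n ∧
      ∃ lam : Fin (n + 1) → ZMod 2, lam ≠ 0 ∧ ∀ j, ∑ i, lam i * k i j = 0) with h | h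
  · rw [dif_pos h]
    obtain ⟨hlam0, hrel⟩ := h.2.choose_spec
    set lam := h.2.choose with hlamdef
    have hrank := h.1
    have hspan : Submodule.span (ZMod 2) (Set.range k) = ⊤ := by
      apply Submodule.eq_top_of_finrank_eq
      rw [hrank, Module.finrank_fintype_fun_eq_card, Fintype.card_fin]
    have hinj : Function.Injective f := by
      rw [← LinearMap.ker_eq_bot, Submodule.eq_bot_iff]
      intro z hz
      rw [LinearMap.mem_ker] at hz
      have hzk : ∀ t, (∑ c : Fin n, k t c * z c) = 0 := by
        intro t; rw [← hfapp z t, hz]; rfl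
      have hspanP : ∀ v ∈ Submodule.span (ZMod 2) (Set.range k),
          (∑ c : Fin n, v c * z c) = 0 := by
        intro v hv
        induction hv using Submodule.span_induction with
        | mem v hv => obtain ⟨t, rfl⟩ := hv; exact hzk t
        | zero => simp
        | add u v _ _ hu hv =>
            simp only [Pi.add_apply, add_mul, Finset.sum_add_distrib, hu, hv, add_zero]
        | smul a v _ hv =>
            simp only [Pi.smul_apply, smul_eq_mul, mul_assoc, ← Finset.mul_sum, hv, mul_zero]
      funext c
      have := hspanP (Pi.single c 1) (hspan ▸ Submodule.mem_top)
      simpa [Pi.single_apply] using this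
    rcases zmod2_cases (∑ t, lam t) with hs | hs
    · -- sum of relation is 0 : unique solution, total sum is 1
      -- construct the functional χ
      let χ : (Fin (n + 1) → ZMod 2) →ₗ[ZMod 2] ZMod 2 :=
        { toFun := fun y => ∑ t, lam t * y t
          map_add' := by
            intro y z
            simp only [Pi.add_apply, mul_add, Finset.sum_add_distrib]
          map_smul' := by
            intro a y
            simp only [Pi.smul_apply, smul_eq_mul, RingHom.id_apply, Finset.mul_sum]
            exact Finset.sum_congr rfl fun t _ => by ring }
      have hχapp : ∀ y, χ y = ∑ t, lam t * y t := fun _ => rfl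
      have hle : LinearMap.range f ≤ LinearMap.ker χ := by
        rintro y ⟨x, rfl⟩
        rw [LinearMap.mem_ker, hχapp]
        calc (∑ t, lam t * f x t) = ∑ t, lam t * ∑ c, k t c * x c := by
              exact Finset.sum_congr rfl fun t _ => by rw [hfapp]
          _ = ∑ c : Fin n, (∑ t : Fin (n + 1), lam t * k t c) * x c := hswap lam x
          _ = 0 := by
              refine Finset.sum_eq_zero fun c _ => ?_
              rw [hrel c, zero_mul]
      have hrangef : Module.finrank (ZMod 2) (LinearMap.range f) = n := by
        have := LinearMap.finrank_range_add_finrank_ker f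
        rw [LinearMap.ker_eq_bot.mpr hinj, finrank_bot,
          Module.finrank_fintype_fun_eq_card, Fintype.card_fin, add_zero] at this
        exact this
      have hrangeχ : LinearMap.range χ = ⊤ := by
        obtain ⟨t0, ht0⟩ := Function.ne_iff.mp hlam0
        have h1 : (1 : ZMod 2) ∈ LinearMap.range χ := by
          refine ⟨Pi.single t0 1, ?_⟩
          rw [hχapp]
          have : ∀ t, lam t * (Pi.single t0 1 : Fin (n + 1) → ZMod 2) t
              = if t = t0 then lam t0 else 0 := by
            intro t
            by_cases h : t = t0 <;> simp [Pi.single_apply, h]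
          rw [Finset.sum_congr rfl fun t _ => this t, Finset.sum_ite_eq']
          simp [zmod2_ne_zero ht0]
        rw [Submodule.eq_top_iff']
        intro a
        have := Submodule.smul_mem _ a h1
        simpa using this
      have hkerχ : Module.finrank (ZMod 2) (LinearMap.ker χ) = n := by
        have := LinearMap.finrank_range_add_finrank_ker χ
        rw [hrangeχ, finrank_top, Module.finrank_self,
          Module.finrank_fintype_fun_eq_card, Fintype.card_fin] at this
        omega
      have heq : LinearMap.range f = LinearMap.ker χ :=
        Submodule.eq_of_le_of_finrank_eq hle (by rw [hrangef, hkerχ])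
      have hone : (fun _ => (1 : ZMod 2)) ∈ LinearMap.ker χ := by
        rw [LinearMap.mem_ker, hχapp]
        simpa using hs
      rw [← heq] at hone
      obtain ⟨x₀, hx₀⟩ := hone
      have hP : ∀ x : Fin n → ZMod 2,
          (∏ t : Fin (n + 1), ∑ c : Fin n, k t c * x c) = if x = x₀ then 1 else 0 := by
        intro x
        by_cases hx : x = x₀
        · subst hx
          rw [if_pos rfl]
          refine Finset.prod_eq_one fun t _ => ?_
          rw [← hfapp, hx₀]
        · rw [if_neg hx]
          by_contra h0
          have hall := Finset.prod_ne_zero_iff.mp h0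
          have hfx : f x = fun _ => 1 := by
            funext t
            rw [hfapp]
            exact zmod2_ne_zero (hall t (Finset.mem_univ t))
          exact hx (hinj (hfx.trans hx₀.symm))
      rw [Finset.sum_congr rfl fun x _ => hP x, Finset.sum_ite_eq']
      simp [hs]
    · -- sum of relation is 1 : no solutions
      have hzero : ∀ x : Fin n → ZMod 2,
          (∏ t : Fin (n + 1), ∑ c : Fin n, k t c * x c) = 0 := by
        intro x
        by_contra h0
        have hall := Finset.prod_ne_zero_iff.mp h0
        have h1 : (∑ t, lam t * ∑ c, k t c * x c) = ∑ t, lam t :=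
          Finset.sum_congr rfl fun t _ => by
            rw [zmod2_ne_zero (hall t (Finset.mem_univ t)), mul_one]
        rw [hswap lam x] at h1
        rw [Finset.sum_eq_zero (fun c _ => by rw [hrel c, zero_mul])] at h1
        rw [hs] at h1
        exact one_ne_zero h1.symm
      rw [Finset.sum_eq_zero fun x _ => hzero x, hs]
      decide
  · rw [dif_neg h]
    have hB : ∃ lam : Fin (n + 1) → ZMod 2, lam ≠ 0 ∧ ∀ j, ∑ i, lam i * k i j = 0 := by
      have hnli : ¬ LinearIndependent (ZMod 2) k := by
        intro hli
        have h1 := finrank_span_eq_card hli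
        have h2 := Submodule.finrank_le (Submodule.span (ZMod 2) (Set.range k))
        rw [h1, Module.finrank_fintype_fun_eq_card] at h2
        simp at h2
      obtain ⟨gco, hsum, i0, hi0⟩ := Fintype.not_linearIndependent_iff.mp hnli
      refine ⟨gco, fun h0 => hi0 (by rw [h0]; rfl), fun j => ?_⟩
      have := congrFun hsum j
      simpa [Finset.sum_apply, Pi.smul_apply, smul_eq_mul] using this
    have hA : Module.finrank (ZMod 2) (Submodule.span (ZMod 2) (Set.range k)) ≠ n :=
      fun hA => h ⟨hA, hB⟩
    have hlt : Module.finrank (ZMod 2) (Submodule.span (ZMod 2) (Set.range k)) < n := by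
      have h2 := Submodule.finrank_le (Submodule.span (ZMod 2) (Set.range k))
      rw [Module.finrank_fintype_fun_eq_card, Fintype.card_fin] at h2
      omega
    have hrankA : (Matrix.of k).rank < n := by
      have h1 : (Matrix.of k).transpose.rank
          = Module.finrank (ZMod 2) (Submodule.span (ZMod 2) (Set.range k)) := by
        show Module.finrank _ (LinearMap.range (Matrix.of k).transpose.mulVecLin) = _
        rw [Matrix.range_mulVecLin]
        rfl
      rw [← Matrix.rank_transpose, h1]
      exact hlt
    have hker : LinearMap.ker f ≠ ⊥ := by
      intro hbot
      have hrn := LinearMap.finrank_range_add_finrank_ker f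
      rw [hbot, finrank_bot, Module.finrank_fintype_fun_eq_card, Fintype.card_fin,
        add_zero] at hrn
      have : (Matrix.of k).rank = n := hrn
      omega
    obtain ⟨z, hzker, hz0⟩ := (Submodule.ne_bot_iff _).mp hker
    have hzk : ∀ t, (∑ c : Fin n, k t c * z c) = 0 := by
      intro t
      rw [LinearMap.mem_ker] at hzker
      rw [← hfapp z t, hzker]
      rfl
    refine (Finset.sum_involution (fun x _ => x + z) ?_ ?_ ?_ ?_).symm
    · intro x _
      have hPeq : (∏ t : Fin (n + 1), ∑ c : Fin n, k t c * (x + z) c)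
          = ∏ t : Fin (n + 1), ∑ c : Fin n, k t c * x c := by
        refine Finset.prod_congr rfl fun t _ => ?_
        simp only [Pi.add_apply, mul_add, Finset.sum_add_distrib, hzk t, add_zero]
      rw [hPeq]
      exact zmod2_add_self _
    · intro x _ _
      intro hxz
      exact hz0 (by simpa using hxz)
    · intro x _
      exact Finset.mem_univ _
    · intro x _
      have hzz : z + z = 0 := by funext c; exact zmod2_add_self _
      show x + z + z = x
      rw [add_assoc, hzz, add_zero]


end Det2Aux

/-- explicit formula for `det₂`: `det₂(k₁,…,k_{n+1}) = ∑_{i<j} Δ_{ij}`, where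
`Δ_{ij}` is the `F₂`-determinant of the `n×n` matrix whose columns (here realized as rows,
which does not affect the determinant mod 2) are the vectors `k₁,…,k_{n+1}` with `kᵢ`, `kⱼ`
deleted together with the coordinate-wise product of `kᵢ` and `kⱼ`. -/
theorem det2_formula (n : ℕ) (k : Fin (n + 1) → Fin n → ZMod 2) :
    det2 n k = ∑ j : Fin (n + 1), ∑ i ∈ Finset.Iio j,
      Matrix.det (Matrix.of fun (r c : Fin n) =>
        Function.update k i (fun t => k i t * k j t) (j.succAbove r) c) := by
  rcases Nat.eq_zero_or_pos n with hn | hn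
  · subst hn
    have hR : (∑ j : Fin 1, ∑ i ∈ Finset.Iio j,
        Matrix.det (Matrix.of fun (r c : Fin 0) =>
          Function.update k i (fun t => k i t * k j t) (j.succAbove r) c)) = 0 := by
      refine Finset.sum_eq_zero fun j _ => ?_
      have hj : j = 0 := Subsingleton.elim j 0
      subst hj
      have : Finset.Iio (0 : Fin 1) = ∅ := by decide
      rw [this, Finset.sum_empty]
    rw [hR]
    unfold det2
    rcases Classical.em (Module.finrank (ZMod 2) (Submodule.span (ZMod 2) (Set.range k)) = 0 ∧
        ∃ lam : Fin 1 → ZMod 2, lam ≠ 0 ∧ ∀ j, ∑ i, lam i * k i j = 0) with h | h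
    · rw [dif_pos h]
      obtain ⟨hl0, _⟩ := h.2.choose_spec
      have h1 : h.2.choose 0 = 1 := by
        apply Det2Aux.zmod2_ne_zero
        intro hh
        apply hl0
        funext i
        rw [Subsingleton.elim i 0, hh]
        rfl
      rw [Fin.sum_univ_one, h1]
      decide
    · rw [dif_neg h]
  · haveI : NeZero n := ⟨hn.ne'⟩
    have h6 : det2 n k = ∑ x : Fin n → ZMod 2, ∏ t : Fin (n + 1), ∑ c : Fin n, k t c * x c := by
      unfold det2
      exact Det2Aux.la_main n k
    rw [h6, Det2Aux.sum_x_eq_surj, ← Det2Aux.sum_det_eq_surj]
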